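/- Let s > 0 and let f : ℝ^d → [0,∞) be an upper semi-continuous 1/s-concave function with finite integral. Then the function z ↦ ∫_{ℝ^d} L_s(f(·+z)) is convex on the interior of the support of f. -/

import Mathlib

open MeasureTheory Set

variable {d : ℕ}

/-- The `s`-polar transform. -/
noncomputable def sPolar (s : ℝ) (f : EuclideanSpace ℝ (Fin d) → ℝ)
    (y : EuclideanSpace ℝ (Fin d)) : ℝ :=
  ⨅ x : {x : EuclideanSpace ℝ (Fin d) // 0 < f x},
    max (1 - (inner ℝ (x : EuclideanSpace ℝ (Fin d)) y : ℝ)) 0 ^ s / f x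

local notation "E" => EuclideanSpace ℝ (Fin d)

noncomputable def sPolarNeg (s : ℝ) (f : EuclideanSpace ℝ (Fin d) → ℝ) (y : EuclideanSpace ℝ (Fin d)) : ℝ :=
  ⨅ x : {x : EuclideanSpace ℝ (Fin d) // 0 < f x}, max ((inner ℝ (x : EuclideanSpace ℝ (Fin d)) y : ℝ) - 1) 0 ^ s / f x


lemma det_id_add_smulRight (φ : E →L[ℝ] ℝ) (w : E) :
    (ContinuousLinearMap.id ℝ E + φ.smulRight w).det = 1 + φ w := by
  classical
  set b := (EuclideanSpace.basisFun (Fin d) ℝ).toBasis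
  rw [ContinuousLinearMap.det, ← LinearMap.det_toMatrix b]
  have : (LinearMap.toMatrix b b) (ContinuousLinearMap.id ℝ E + φ.smulRight w).toLinearMap
      = 1 + Matrix.replicateCol Unit (fun i => b.repr w i) * Matrix.replicateRow Unit (fun j => φ (b j)) := by
    ext i j
    simp [LinearMap.toMatrix_apply, Matrix.one_apply, Matrix.mul_apply,
      ContinuousLinearMap.smulRight_apply, map_add, Finsupp.single_apply, eq_comm, mul_comm]
  rw [this, Matrix.det_one_add_replicateCol_mul_replicateRow]
  congr 1
  rw [dotProduct]
  calc ∑ j, φ (b j) * b.repr w j = φ (∑ j, b.repr w j • b j) := by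
        rw [map_sum]; congr 1; ext j; simp [mul_comm]
    _ = φ w := by rw [b.sum_repr]

noncomputable def Dz (z w : E) : E →L[ℝ] E :=
  (1 - (inner ℝ z w : ℝ))⁻¹ • ContinuousLinearMap.id ℝ E
    + ((((1 - (inner ℝ z w : ℝ)) ^ 2)⁻¹) • innerSL ℝ z).smulRight w

lemma hasFDerivAt_Tz (z w : E) (h : 1 - (inner ℝ z w : ℝ) ≠ 0) :
    HasFDerivAt (fun v => (1 - (inner ℝ z v : ℝ))⁻¹ • v) (Dz z w) w := by
  have h1 : HasFDerivAt (fun v : E => 1 - (inner ℝ z v : ℝ)) (-(innerSL ℝ z)) w := by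
    exact ((hasFDerivAt_const (1:ℝ) w).sub (innerSL ℝ z).hasFDerivAt).congr_fderiv (by simp)
  have h2 : HasFDerivAt (fun v : E => (1 - (inner ℝ z v : ℝ))⁻¹)
      (((1 - (inner ℝ z w : ℝ)) ^ 2)⁻¹ • innerSL ℝ z) w := by
    have := (hasDerivAt_inv h).comp_hasFDerivAt w h1
    refine this.congr_fderiv ?_
    ext v
    simp only [ContinuousLinearMap.smul_apply, ContinuousLinearMap.neg_apply, smul_eq_mul,
      innerSL_apply_apply]
    ring
  have h3 := h2.smul (hasFDerivAt_id w)
  exact h3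

lemma det_Dz (z w : E) (h : 1 - (inner ℝ z w : ℝ) ≠ 0) :
    (Dz z w).det = ((1 - (inner ℝ z w : ℝ))⁻¹) ^ (d + 1) := by
  set c : ℝ := 1 - (inner ℝ z w : ℝ) with hc
  have heq : Dz z w = c⁻¹ • (ContinuousLinearMap.id ℝ E + (c⁻¹ • innerSL ℝ z).smulRight w) := by
    unfold Dz
    refine ContinuousLinearMap.ext fun v => ?_
    simp only [ContinuousLinearMap.add_apply, ContinuousLinearMap.smul_apply,
      ContinuousLinearMap.id_apply, ContinuousLinearMap.smulRight_apply, innerSL_apply_apply,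
      smul_eq_mul, ← hc]
    have h2 : (c ^ 2)⁻¹ = c⁻¹ * c⁻¹ := by rw [sq, mul_inv]
    rw [h2]
    module
  rw [heq]
  have hdet : (ContinuousLinearMap.id ℝ E + (c⁻¹ • innerSL ℝ z).smulRight w).det
      = 1 + c⁻¹ * (inner ℝ z w : ℝ) := by
    simpa using det_id_add_smulRight (c⁻¹ • innerSL ℝ z) w
  have hsmul : (c⁻¹ • (ContinuousLinearMap.id ℝ E + (c⁻¹ • innerSL ℝ z).smulRight w)).det
      = c⁻¹ ^ (Module.finrank ℝ E)
        * (ContinuousLinearMap.id ℝ E + (c⁻¹ • innerSL ℝ z).smulRight w).det := by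
    rw [ContinuousLinearMap.det, ContinuousLinearMap.det, ContinuousLinearMap.coe_smul,
      LinearMap.det_smul]
  rw [hsmul, hdet, finrank_euclideanSpace_fin]
  have hiw : (inner ℝ z w : ℝ) = 1 - c := by rw [hc]; ring
  rw [hiw, pow_succ]
  have hcne : c ≠ 0 := h
  field_simp
  ring


lemma hyperplane_null (z : E) : MeasureTheory.volume {y : E | (inner ℝ z y : ℝ) = -1} = 0 := by
  by_cases hz : z = 0
  · have : {y : E | (inner ℝ z y : ℝ) = -1} = ∅ := by
      ext y
      simp [hz]
    rw [this]
    simp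
  · set y₀ : E := (-1 / (‖z‖ ^ 2)) • z with hy₀def
    have hnz : ‖z‖ ≠ 0 := norm_ne_zero_iff.mpr hz
    have hy₀ : (inner ℝ z y₀ : ℝ) = -1 := by
      rw [hy₀def, real_inner_smul_right, real_inner_self_eq_norm_sq]
      field_simp
    set K : Submodule ℝ (EuclideanSpace ℝ (Fin d)) := LinearMap.ker (((innerSL ℝ z) : EuclideanSpace ℝ (Fin d) →L[ℝ] ℝ) : EuclideanSpace ℝ (Fin d) →ₗ[ℝ] ℝ) with hK
    have hKne : K ≠ ⊤ := by
      intro h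
      have hzK : z ∈ K := h ▸ Submodule.mem_top
      rw [hK, LinearMap.mem_ker] at hzK
      have : (inner ℝ z z : ℝ) = 0 := hzK
      exact hz (inner_self_eq_zero.mp this)
    have hset : {y : E | (inner ℝ z y : ℝ) = -1} = (fun y => y + (-y₀)) ⁻¹' (K : Set (EuclideanSpace ℝ (Fin d))) := by
      ext y
      simp only [mem_setOf_eq, mem_preimage, SetLike.mem_coe, hK, LinearMap.mem_ker]
      have : ((innerSL ℝ z) (y + -y₀) : ℝ) = (inner ℝ z y : ℝ) - (inner ℝ z y₀ : ℝ) := by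
        simp [inner_add_right, inner_neg_right]
        ring
      rw [ContinuousLinearMap.coe_coe, this, hy₀]
      constructor
      · intro h; rw [h]; ring
      · intro h; linarith
    rw [hset, measure_preimage_add_right]
    exact MeasureTheory.Measure.addHaar_submodule _ K hKne

lemma inv_rpow_convex_ineq {p : ℝ} (hp : 1 ≤ p) {c0 c1 a b : ℝ} (h0 : 0 < c0) (h1 : 0 < c1)
    (ha : 0 ≤ a) (hb : 0 ≤ b) (hab : a + b = 1) :
    ((a * c0 + b * c1)⁻¹) ^ p ≤ a * (c0⁻¹) ^ p + b * (c1⁻¹) ^ p := by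
  have hpos : 0 < a * c0 + b * c1 := by
    rcases eq_or_lt_of_le ha with h | h
    · have hb1 : b = 1 := by linarith
      rw [← h, hb1]; simpa using h1
    · have : 0 < a * c0 := mul_pos h h0
      nlinarith [mul_nonneg hb h1.le]
  have step1 : (a * c0 + b * c1)⁻¹ ≤ a * c0⁻¹ + b * c1⁻¹ := by
    rw [inv_eq_one_div, div_le_iff₀ hpos]
    have e0 : c0 * c0⁻¹ = 1 := mul_inv_cancel₀ h0.ne'
    have e1 : c1 * c1⁻¹ = 1 := mul_inv_cancel₀ h1.ne'
    have key : c0 * c1⁻¹ + c1 * c0⁻¹ ≥ 2 := by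
      have h2 : (0:ℝ) < c0 * c1 := mul_pos h0 h1
      have h3 : c0 * c1⁻¹ + c1 * c0⁻¹ - 2 = (c0 - c1) ^ 2 / (c0 * c1) := by
        field_simp
        ring
      nlinarith [sq_nonneg (c0 - c1), div_nonneg (sq_nonneg (c0 - c1)) h2.le]
    have key2 : a * b * 2 ≤ a * b * (c0 * c1⁻¹ + c1 * c0⁻¹) :=
      mul_le_mul_of_nonneg_left key (mul_nonneg ha hb)
    have expand : (a * c0⁻¹ + b * c1⁻¹) * (a * c0 + b * c1)
        = a ^ 2 * (c0 * c0⁻¹) + b ^ 2 * (c1 * c1⁻¹) + a * b * (c0 * c1⁻¹ + c1 * c0⁻¹) := by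
      ring
    have hsq : (a + b) ^ 2 = 1 := by rw [hab]; ring
    rw [expand, e0, e1]
    nlinarith [key2, hsq]
  calc ((a * c0 + b * c1)⁻¹) ^ p ≤ (a * c0⁻¹ + b * c1⁻¹) ^ p :=
        Real.rpow_le_rpow (inv_nonneg.mpr hpos.le) step1 (by linarith)
    _ ≤ a * (c0⁻¹) ^ p + b * (c1⁻¹) ^ p := by
        have := (convexOn_rpow hp).2 (mem_Ici.mpr (inv_nonneg.mpr h0.le))
          (mem_Ici.mpr (inv_nonneg.mpr h1.le)) ha hb hab
        simpa [smul_eq_mul] using this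

lemma support_convex (s : ℝ) (hs : 0 < s) (f : EuclideanSpace ℝ (Fin d) → ℝ)
    (hf : ∀ x, 0 ≤ f x)
    (hconc : ∀ x y : EuclideanSpace ℝ (Fin d), 0 < f x → 0 < f y →
      ∀ t ∈ Set.Icc (0 : ℝ) 1,
        (1 - t) * f x ^ (1 / s) + t * f y ^ (1 / s) ≤ f ((1 - t) • x + t • y) ^ (1 / s)) :
    Convex ℝ (Function.support f) := by
  intro x hx y hy a b ha hb hab
  have hfx : 0 < f x := lt_of_le_of_ne (hf x) (Ne.symm hx)
  have hfy : 0 < f y := lt_of_le_of_ne (hf y) (Ne.symm hy)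
  have h1a : 1 - b = a := by linarith
  have hmem : b ∈ Set.Icc (0:ℝ) 1 := ⟨hb, by linarith⟩
  have := hconc x y hfx hfy b hmem
  rw [h1a] at this
  have hlhs : 0 < a * f x ^ (1 / s) + b * f y ^ (1 / s) := by
    have hx1 : 0 < f x ^ (1 / s) := Real.rpow_pos_of_pos hfx _
    have hy1 : 0 < f y ^ (1 / s) := Real.rpow_pos_of_pos hfy _
    rcases eq_or_lt_of_le ha with h | h
    · have hb1 : b = 1 := by linarith
      rw [← h, hb1]; simpa using hy1
    · nlinarith [mul_nonneg hb hy1.le]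
  have hres : 0 < f (a • x + b • y) ^ (1 / s) := lt_of_lt_of_le hlhs this
  intro hzero
  rw [Function.mem_support] at *
  rw [hzero, Real.zero_rpow (by positivity : (1:ℝ)/s ≠ 0)] at hres
  exact lt_irrefl 0 hres




lemma ciInf_reindex {α β : Sort*} (e : α ≃ β) (g : β → ℝ) : ⨅ a, g (e a) = ⨅ b, g b := by
  rw [iInf, iInf, ← Function.Surjective.range_comp e.surjective g]
  rfl

lemma ciInf_const_mul {ι : Sort*} [Nonempty ι] (c : ℝ) (hc : 0 ≤ c) (g : ι → ℝ)
    (hg : ∀ i, 0 ≤ g i) : ⨅ i, c * g i = c * ⨅ i, g i := by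
  refine (Monotone.map_ciInf_of_continuousAt ?_ ?_ ?_).symm
  · exact (continuous_const.mul continuous_id).continuousAt
  · exact fun a b hab => mul_le_mul_of_nonneg_left hab hc
  · exact ⟨0, fun x hx => by obtain ⟨i, rfl⟩ := hx; exact hg i⟩

section shift
variable (s : ℝ) (f : EuclideanSpace ℝ (Fin d) → ℝ)

noncomputable def shiftEquiv (z : E) : {u : E // 0 < f u} ≃ {x : E // 0 < f (x + z)} where
  toFun u := ⟨(u : E) - z, by rw [sub_add_cancel]; exact u.2⟩
  invFun x := ⟨(x : E) + z, x.2⟩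
  left_inv u := Subtype.ext (sub_add_cancel _ _)
  right_inv x := Subtype.ext (add_sub_cancel_right _ _)

lemma key_inner_aux (a b : ℝ) (h : 1 - a ≠ 0) :
    1 - (1 - a)⁻¹ * (b - a) = (1 - a)⁻¹ * (1 - b) := by
  field_simp
  ring

lemma key_inner (z w u : E) (h : (1 : ℝ) - (inner ℝ z w : ℝ) ≠ 0) :
    1 - (inner ℝ (u - z) (((1 : ℝ) - (inner ℝ z w : ℝ))⁻¹ • w) : ℝ)
      = (1 - (inner ℝ z w : ℝ))⁻¹ * (1 - (inner ℝ u w : ℝ)) := by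
  rw [real_inner_smul_right, inner_sub_left]
  exact key_inner_aux _ _ h

lemma sPolar_shift_pos (hs : 0 < s) (hf : ∀ x, 0 ≤ f x) (z w : E) (hz : 0 < f z)
    (h : 0 < (1 : ℝ) - (inner ℝ z w : ℝ)) :
    sPolar s (fun x => f (x + z)) (((1 : ℝ) - (inner ℝ z w : ℝ))⁻¹ • w)
      = ((1 - (inner ℝ z w : ℝ))⁻¹) ^ s * sPolar s f w := by
  set c : ℝ := 1 - (inner ℝ z w : ℝ) with hc
  have : Nonempty {u : E // 0 < f u} := ⟨⟨z, hz⟩⟩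
  unfold sPolar
  rw [← ciInf_reindex (shiftEquiv f z)]
  have hpt : ∀ u : {u : E // 0 < f u},
      max (1 - (inner ℝ ((shiftEquiv f z u : E)) (c⁻¹ • w) : ℝ)) 0 ^ s
        / f ((shiftEquiv f z u : E) + z)
      = c⁻¹ ^ s * (max (1 - (inner ℝ (u : E) w : ℝ)) 0 ^ s / f u) := by
    intro u
    have h1 : ((shiftEquiv f z u : E)) = (u : E) - z := rfl
    have h2 : ((u : E) - z) + z = (u : E) := by abel
    rw [h1, h2, key_inner z w u h.ne', ← hc]
    have hpos : (0:ℝ) ≤ c⁻¹ := le_of_lt (inv_pos.mpr h)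
    have hmax : (c⁻¹ * (1 - (inner ℝ (u : E) w : ℝ)) ⊔ 0) = c⁻¹ * ((1 - (inner ℝ (u : E) w : ℝ)) ⊔ 0) := by
      rw [mul_max_of_nonneg _ _ hpos, mul_zero]
    rw [hmax, Real.mul_rpow hpos (le_max_right _ _), mul_div_assoc]
  rw [iInf_congr hpt]
  exact ciInf_const_mul _ (Real.rpow_nonneg (inv_nonneg.mpr h.le) s) _
    (fun u => div_nonneg (Real.rpow_nonneg (le_max_right _ _) s) (hf u))

lemma sPolar_shift_neg (hs : 0 < s) (hf : ∀ x, 0 ≤ f x) (z w : E) (hz : 0 < f z)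
    (h : (1 : ℝ) - (inner ℝ z w : ℝ) < 0) :
    sPolar s (fun x => f (x + z)) (((1 : ℝ) - (inner ℝ z w : ℝ))⁻¹ • w)
      = (((inner ℝ z w : ℝ) - 1)⁻¹) ^ s * sPolarNeg s f w := by
  set c : ℝ := 1 - (inner ℝ z w : ℝ) with hc
  have : Nonempty {u : E // 0 < f u} := ⟨⟨z, hz⟩⟩
  unfold sPolar sPolarNeg
  rw [← ciInf_reindex (shiftEquiv f z)]
  have hneg : (0:ℝ) ≤ (-c)⁻¹ := inv_nonneg.mpr (by linarith)
  have hpt : ∀ u : {u : E // 0 < f u},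
      max (1 - (inner ℝ ((shiftEquiv f z u : E)) (c⁻¹ • w) : ℝ)) 0 ^ s
        / f ((shiftEquiv f z u : E) + z)
      = (-c)⁻¹ ^ s * (max ((inner ℝ (u : E) w : ℝ) - 1) 0 ^ s / f u) := by
    intro u
    have h1 : ((shiftEquiv f z u : E)) = (u : E) - z := rfl
    have h2 : ((u : E) - z) + z = (u : E) := by abel
    rw [h1, h2, key_inner z w u h.ne, ← hc]
    have h3 : c⁻¹ * (1 - (inner ℝ (u : E) w : ℝ)) = (-c)⁻¹ * ((inner ℝ (u : E) w : ℝ) - 1) := by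
      rw [inv_neg]; ring
    have hmax : ((-c)⁻¹ * ((inner ℝ (u : E) w : ℝ) - 1) ⊔ 0) = (-c)⁻¹ * (((inner ℝ (u : E) w : ℝ) - 1) ⊔ 0) := by
      rw [mul_max_of_nonneg _ _ hneg, mul_zero]
    rw [h3, hmax, Real.mul_rpow hneg (le_max_right _ _), mul_div_assoc]
  rw [iInf_congr hpt]
  have h4 : (-c) = (inner ℝ z w : ℝ) - 1 := by rw [hc]; ring
  rw [← h4]
  exact ciInf_const_mul _ (Real.rpow_nonneg hneg s) _
    (fun u => div_nonneg (Real.rpow_nonneg (le_max_right _ _) s) (hf u))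
end shift



section g
variable (s : ℝ) (f : EuclideanSpace ℝ (Fin d) → ℝ)

lemma sPolar_nonneg (hf : ∀ x, 0 ≤ f x) (y : E) : 0 ≤ sPolar s f y :=
  Real.iInf_nonneg fun x => div_nonneg (Real.rpow_nonneg (le_max_right _ _) s) (hf x)

lemma term_bddBelow (y : E) : BddBelow (range fun x : {x : E // 0 < f x} =>
    max (1 - (inner ℝ (x : E) y : ℝ)) 0 ^ s / f x) := by
  refine ⟨0, fun v hv => ?_⟩
  obtain ⟨x, rfl⟩ := hv
  exact div_nonneg (Real.rpow_nonneg (le_max_right _ _) s) (le_of_lt x.2)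

lemma sPolar_le_of_one_le_inner (hs : 0 < s) {x y : E} (hx : 0 < f x)
    (hxy : 1 ≤ (inner ℝ x y : ℝ)) : sPolar s f y ≤ 0 := by
  have : max (1 - (inner ℝ x y : ℝ)) 0 ^ s / f x = 0 := by
    rw [max_eq_right (by linarith), Real.zero_rpow (ne_of_gt hs), zero_div]
  calc sPolar s f y ≤ max (1 - (inner ℝ x y : ℝ)) 0 ^ s / f x :=
        ciInf_le (term_bddBelow s f y) ⟨x, hx⟩
    _ = 0 := this

lemma sPolar_le_inv (hs : 0 < s) {z : E} (hz : 0 < f z) (y : E) :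
    sPolar s (fun x => f (x + z)) y ≤ (f z)⁻¹ := by
  have h0 : (0 : ℝ) < f ((0 : E) + z) := by rwa [zero_add]
  calc sPolar s (fun x => f (x + z)) y
      ≤ max (1 - (inner ℝ ((0:E)) y : ℝ)) 0 ^ s / f ((0:E) + z) :=
        ciInf_le (term_bddBelow s (fun x => f (x + z)) y) ⟨0, h0⟩
    _ = (f z)⁻¹ := by
        rw [inner_zero_left, sub_zero, max_eq_left zero_le_one, Real.one_rpow, zero_add,
          one_div]

lemma measurable_sPolar_shift (hs : 0 < s) {z : E} (hz : 0 < f z) :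
    Measurable (fun y => sPolar s (fun x => f (x + z)) y) := by
  have hne : Nonempty {x : E // 0 < f (x + z)} := ⟨⟨0, by rwa [zero_add]⟩⟩
  apply measurable_of_Iio
  intro c
  have : (fun y => sPolar s (fun x => f (x + z)) y) ⁻¹' Iio c
      = ⋃ x : {x : E // 0 < f (x + z)},
          {y : E | max (1 - (inner ℝ (x : E) y : ℝ)) 0 ^ s / f ((x : E) + z) < c} := by
    ext y
    simp only [mem_preimage, mem_Iio, mem_iUnion, mem_setOf_eq]
    constructor
    · intro h
      exact exists_lt_of_ciInf_lt h
    · rintro ⟨x, hx⟩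
      exact lt_of_le_of_lt (ciInf_le (term_bddBelow s (fun v => f (v + z)) y) x) hx
  rw [this]
  refine IsOpen.measurableSet (isOpen_iUnion fun x => ?_)
  have hcont : Continuous fun y : E => max (1 - (inner ℝ (x : E) y : ℝ)) 0 ^ s / f ((x : E) + z) := by
    refine Continuous.div_const ?_ _
    refine Continuous.rpow_const ?_ (fun _ => Or.inr hs.le)
    exact (continuous_const.sub (innerSL ℝ (x : E)).continuous).max continuous_const
  exact isOpen_lt hcont continuous_const

lemma sPolar_shift_eq_zero (hs : 0 < s) {z : E} {r : ℝ} (hr : 0 < r)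
    (hball : Metric.ball z r ⊆ Function.support f) (hf : ∀ x, 0 ≤ f x) {y : E}
    (hy : 1 ≤ (r / 2) * ‖y‖) : sPolar s (fun x => f (x + z)) y = 0 := by
  have hy0 : y ≠ 0 := by
    intro h
    rw [h, norm_zero, mul_zero] at hy
    linarith
  have h0 : ‖y‖ ≠ 0 := norm_ne_zero_iff.mpr hy0
  set x : E := (r / 2 * ‖y‖⁻¹) • y with hx
  have hnx : ‖x‖ = r / 2 := by
    rw [hx, norm_smul, norm_mul, Real.norm_eq_abs, Real.norm_eq_abs,
      abs_of_pos (by positivity : (0:ℝ) < r / 2),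
      abs_of_pos (inv_pos.mpr (norm_pos_iff.mpr hy0))]
    field_simp
  have hmem : x + z ∈ Function.support f := by
    apply hball
    rw [Metric.mem_ball, dist_eq_norm]
    have : x + z - z = x := by abel
    rw [this, hnx]
    linarith
  have hpos : 0 < f (x + z) := lt_of_le_of_ne (hf _) (Ne.symm hmem)
  have hinner : 1 ≤ (inner ℝ x y : ℝ) := by
    rw [hx, real_inner_smul_left, real_inner_self_eq_norm_sq]
    calc (1:ℝ) ≤ r / 2 * ‖y‖ := hy
      _ = r / 2 * ‖y‖⁻¹ * (‖y‖ * ‖y‖) := by field_simp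
      _ = r / 2 * ‖y‖⁻¹ * ‖y‖ ^ 2 := by ring
  refine le_antisymm ?_ (sPolar_nonneg s _ (fun v => hf _) y)
  exact sPolar_le_of_one_le_inner s (fun v => f (v + z)) hs hpos hinner

lemma integrable_sPolar_shift (hs : 0 < s) (hf : ∀ x, 0 ≤ f x) {z : E} {r : ℝ} (hr : 0 < r)
    (hball : Metric.ball z r ⊆ Function.support f) (hz : 0 < f z) :
    Integrable (fun y => sPolar s (fun x => f (x + z)) y) := by
  set R : ℝ := 2 / r with hR
  have hRpos : 0 < R := by positivity
  refine Integrable.mono' (g := (Metric.closedBall (0:E) R).indicator fun _ => (f z)⁻¹)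
    ?_ ?_ ?_
  · exact (integrable_indicator_iff measurableSet_closedBall).mpr
      (integrableOn_const MeasureTheory.measure_closedBall_lt_top.ne)
  · exact (measurable_sPolar_shift s f hs hz).aestronglyMeasurable
  · refine Filter.Eventually.of_forall fun y => ?_
    rw [Real.norm_eq_abs, abs_of_nonneg (sPolar_nonneg s _ (fun v => hf _) y)]
    by_cases hmem : y ∈ Metric.closedBall (0:E) R
    · rw [indicator_of_mem hmem]
      exact sPolar_le_inv s f hs hz y
    · rw [indicator_of_notMem hmem]
      rw [Metric.mem_closedBall, dist_zero_right, not_le] at hmem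
      have h2 : 2 / r < ‖y‖ := hmem
      rw [div_lt_iff₀ hr] at h2
      have : 1 ≤ r / 2 * ‖y‖ := by nlinarith
      rw [sPolar_shift_eq_zero s f hs hr hball hf this]
end g




lemma term_bddBelow' (s : ℝ) (f : EuclideanSpace ℝ (Fin d) → ℝ) (hf : ∀ x, 0 ≤ f x) (y : E)
    (g : ℝ → ℝ) (hg : ∀ t, 0 ≤ g t) :
    BddBelow (range fun x : {x : E // 0 < f x} => g (inner ℝ (x : E) y : ℝ) / f x) := by
  refine ⟨0, fun v hv => ?_⟩
  obtain ⟨x, rfl⟩ := hv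
  exact div_nonneg (hg _) (le_of_lt x.2)

lemma sPolar_pos_inner_lt (s : ℝ) (hs : 0 < s) (f : EuclideanSpace ℝ (Fin d) → ℝ)
    (hf : ∀ x, 0 ≤ f x) {z w : E} {r : ℝ} (hr : 0 < r)
    (hball : Metric.ball z r ⊆ Function.support f)
    (hpos : 0 < sPolar s f w) : (inner ℝ z w : ℝ) < 1 := by
  by_contra hcon
  push_neg at hcon
  have hw : w ≠ 0 := by
    intro h
    rw [h, inner_zero_right] at hcon
    linarith
  set u : E := z + (r / 2 * ‖w‖⁻¹) • w with hu
  have hnu : u ∈ Metric.ball z r := by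
    rw [Metric.mem_ball, dist_eq_norm]
    have h1 : u - z = (r / 2 * ‖w‖⁻¹) • w := by rw [hu]; abel
    have h0w : ‖w‖ ≠ 0 := norm_ne_zero_iff.mpr hw
    rw [h1, norm_smul, Real.norm_eq_abs,
      abs_of_pos (mul_pos (by positivity) (inv_pos.mpr (norm_pos_iff.mpr hw)))]
    have h3 : r / 2 * ‖w‖⁻¹ * ‖w‖ = r / 2 := by field_simp
    rw [h3]
    linarith
  have hfu : 0 < f u := lt_of_le_of_ne (hf u) (Ne.symm (hball hnu))
  have hiu : 1 ≤ (inner ℝ u w : ℝ) := by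
    rw [hu, inner_add_left, real_inner_smul_left, real_inner_self_eq_norm_sq]
    have h2 : 0 < r / 2 * ‖w‖⁻¹ * ‖w‖ ^ 2 := by
      have := norm_pos_iff.mpr hw
      positivity
    linarith
  have hterm : max (1 - (inner ℝ u w : ℝ)) 0 ^ s / f u = 0 := by
    rw [max_eq_right (by linarith), Real.zero_rpow (ne_of_gt hs), zero_div]
  have : sPolar s f w ≤ 0 := by
    calc sPolar s f w ≤ max (1 - (inner ℝ u w : ℝ)) 0 ^ s / f u := by
          apply ciInf_le _ (⟨u, hfu⟩ : {x : E // 0 < f x})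
          refine ⟨0, fun v hv => ?_⟩
          obtain ⟨x, rfl⟩ := hv
          exact div_nonneg (Real.rpow_nonneg (le_max_right _ _) s) (le_of_lt x.2)
      _ = 0 := hterm
  linarith

lemma sPolarNeg_pos_inner_gt (s : ℝ) (hs : 0 < s) (f : EuclideanSpace ℝ (Fin d) → ℝ)
    (hf : ∀ x, 0 ≤ f x) {z w : E} {r : ℝ} (hr : 0 < r)
    (hball : Metric.ball z r ⊆ Function.support f)
    (hpos : 0 < sPolarNeg s f w) : 1 < (inner ℝ z w : ℝ) := by
  by_contra hcon
  push_neg at hcon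
  -- pick u in ball with inner u w ≤ 1
  obtain ⟨u, hfu, hiu⟩ : ∃ u : E, 0 < f u ∧ (inner ℝ u w : ℝ) ≤ 1 := by
    by_cases hw : w = 0
    · refine ⟨z, lt_of_le_of_ne (hf z) (Ne.symm (hball (Metric.mem_ball_self hr))), ?_⟩
      rw [hw, inner_zero_right]; linarith
    · set u : E := z - (r / 2 * ‖w‖⁻¹) • w with hu
      have hnu : u ∈ Metric.ball z r := by
        rw [Metric.mem_ball, dist_eq_norm]
        have h1 : u - z = -((r / 2 * ‖w‖⁻¹) • w) := by rw [hu]; abel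
        have h0w : ‖w‖ ≠ 0 := norm_ne_zero_iff.mpr hw
        rw [h1, norm_neg, norm_smul, Real.norm_eq_abs,
          abs_of_pos (mul_pos (by positivity) (inv_pos.mpr (norm_pos_iff.mpr hw)))]
        have h3 : r / 2 * ‖w‖⁻¹ * ‖w‖ = r / 2 := by field_simp
        rw [h3]
        linarith
      refine ⟨u, lt_of_le_of_ne (hf u) (Ne.symm (hball hnu)), ?_⟩
      rw [hu, inner_sub_left, real_inner_smul_left, real_inner_self_eq_norm_sq]
      have h2 : 0 < r / 2 * ‖w‖⁻¹ * ‖w‖ ^ 2 := by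
        have := norm_pos_iff.mpr hw
        positivity
      linarith
  have hterm : max ((inner ℝ u w : ℝ) - 1) 0 ^ s / f u = 0 := by
    rw [max_eq_right (by linarith), Real.zero_rpow (ne_of_gt hs), zero_div]
  have : sPolarNeg s f w ≤ 0 := by
    calc sPolarNeg s f w ≤ max ((inner ℝ u w : ℝ) - 1) 0 ^ s / f u := by
          apply ciInf_le _ (⟨u, hfu⟩ : {x : E // 0 < f x})
          refine ⟨0, fun v hv => ?_⟩
          obtain ⟨x, rfl⟩ := hv
          exact div_nonneg (Real.rpow_nonneg (le_max_right _ _) s) (le_of_lt x.2)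
      _ = 0 := hterm
  linarith

lemma aux1 (t : ℝ) (h : 1 - t ≠ 0) : 1 + (1 - t)⁻¹ * t = (1 - t)⁻¹ := by field_simp; ring
lemma aux2 (t : ℝ) (h : 1 - t ≠ 0) : (1 - t)⁻¹ * t = (1 - t)⁻¹ - 1 := by field_simp; ring
lemma aux3 (t : ℝ) (h : 1 + t ≠ 0) : (1 + t)⁻¹ * t = 1 - (1 + t)⁻¹ := by field_simp; ring
lemma aux4 (t : ℝ) (h : 1 + t ≠ 0) : 1 - (1 + t)⁻¹ * t = (1 + t)⁻¹ := by field_simp; ring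

noncomputable def Tmap (z w : EuclideanSpace ℝ (Fin d)) : EuclideanSpace ℝ (Fin d) :=
  (1 - (inner ℝ z w : ℝ))⁻¹ • w

lemma inner_Tmap (z w : E) : (inner ℝ z (Tmap z w) : ℝ) = (1 - (inner ℝ z w : ℝ))⁻¹ * (inner ℝ z w : ℝ) := by
  rw [Tmap, real_inner_smul_right]

lemma Smap_Tmap (z w : E) (hc : (1 : ℝ) - (inner ℝ z w : ℝ) ≠ 0) :
    (1 + (inner ℝ z (Tmap z w) : ℝ))⁻¹ • Tmap z w = w := by
  have h2 : 1 + (inner ℝ z (Tmap z w) : ℝ) = (1 - (inner ℝ z w : ℝ))⁻¹ := by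
    rw [inner_Tmap]; exact aux1 _ hc
  rw [h2, Tmap, smul_smul, inv_inv, mul_inv_cancel₀ hc, one_smul]

lemma injOn_Tmap (z : E) {A : Set (EuclideanSpace ℝ (Fin d))}
    (hA : ∀ w ∈ A, (1 : ℝ) - (inner ℝ z w : ℝ) ≠ 0) : InjOn (Tmap z) A := by
  intro a ha b hb h
  rw [← Smap_Tmap z a (hA a ha), ← Smap_Tmap z b (hA b hb), h]

lemma image_Tmap_U (z : E) :
    Tmap z '' {w : EuclideanSpace ℝ (Fin d) | (inner ℝ z w : ℝ) < 1}
      = {y : EuclideanSpace ℝ (Fin d) | -1 < (inner ℝ z y : ℝ)} := by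
  ext y
  constructor
  · rintro ⟨w, hw, rfl⟩
    have hc : 0 < 1 - (inner ℝ z w : ℝ) := by simpa [sub_pos] using hw
    rw [mem_setOf_eq, inner_Tmap]
    have h1 : (1 - (inner ℝ z w : ℝ))⁻¹ * (inner ℝ z w : ℝ)
        = (1 - (inner ℝ z w : ℝ))⁻¹ - 1 := aux2 _ hc.ne'
    have h2 : 0 < (1 - (inner ℝ z w : ℝ))⁻¹ := inv_pos.mpr hc
    rw [h1]; linarith
  · intro hy
    rw [mem_setOf_eq] at hy
    have he : 0 < 1 + (inner ℝ z y : ℝ) := by linarith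
    refine ⟨(1 + (inner ℝ z y : ℝ))⁻¹ • y, ?_, ?_⟩
    · rw [mem_setOf_eq, real_inner_smul_right]
      have h1 : (1 + (inner ℝ z y : ℝ))⁻¹ * (inner ℝ z y : ℝ) = 1 - (1 + (inner ℝ z y : ℝ))⁻¹ :=
        aux3 _ he.ne'
      have h2 : 0 < (1 + (inner ℝ z y : ℝ))⁻¹ := inv_pos.mpr he
      rw [h1]; linarith
    · have h3 : (1 : ℝ) - (inner ℝ z ((1 + (inner ℝ z y : ℝ))⁻¹ • y) : ℝ)
          = (1 + (inner ℝ z y : ℝ))⁻¹ := by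
        rw [real_inner_smul_right]; exact aux4 _ he.ne'
      rw [Tmap, h3, smul_smul, inv_inv, mul_inv_cancel₀ he.ne', one_smul]

lemma image_Tmap_V (z : E) :
    Tmap z '' {w : EuclideanSpace ℝ (Fin d) | 1 < (inner ℝ z w : ℝ)}
      = {y : EuclideanSpace ℝ (Fin d) | (inner ℝ z y : ℝ) < -1} := by
  ext y
  constructor
  · rintro ⟨w, hw, rfl⟩
    have hc : 1 - (inner ℝ z w : ℝ) < 0 := by
      rw [mem_setOf_eq] at hw; linarith
    rw [mem_setOf_eq, inner_Tmap]
    have h1 : (1 - (inner ℝ z w : ℝ))⁻¹ * (inner ℝ z w : ℝ)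
        = (1 - (inner ℝ z w : ℝ))⁻¹ - 1 := aux2 _ (ne_of_lt hc)
    have h2 : (1 - (inner ℝ z w : ℝ))⁻¹ < 0 := inv_neg''.mpr hc
    rw [h1]; linarith
  · intro hy
    rw [mem_setOf_eq] at hy
    have he : 1 + (inner ℝ z y : ℝ) < 0 := by linarith
    refine ⟨(1 + (inner ℝ z y : ℝ))⁻¹ • y, ?_, ?_⟩
    · rw [mem_setOf_eq, real_inner_smul_right]
      have h1 : (1 + (inner ℝ z y : ℝ))⁻¹ * (inner ℝ z y : ℝ) = 1 - (1 + (inner ℝ z y : ℝ))⁻¹ :=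
        aux3 _ (ne_of_lt he)
      have h2 : (1 + (inner ℝ z y : ℝ))⁻¹ < 0 := inv_neg''.mpr he
      rw [h1]; linarith
    · have h3 : (1 : ℝ) - (inner ℝ z ((1 + (inner ℝ z y : ℝ))⁻¹ • y) : ℝ)
          = (1 + (inner ℝ z y : ℝ))⁻¹ := by
        rw [real_inner_smul_right]; exact aux4 _ (ne_of_lt he)
      rw [Tmap, h3, smul_smul, inv_inv, mul_inv_cancel₀ (ne_of_lt he), one_smul]

noncomputable def AAfun (s : ℝ) (f : EuclideanSpace ℝ (Fin d) → ℝ)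
    (z w : EuclideanSpace ℝ (Fin d)) : ℝ :=
  if (inner ℝ z w : ℝ) < 1 then
    sPolar s f w * ((1 - (inner ℝ z w : ℝ))⁻¹) ^ ((d : ℝ) + 1 + s) else 0

noncomputable def BBfun (s : ℝ) (f : EuclideanSpace ℝ (Fin d) → ℝ)
    (z w : EuclideanSpace ℝ (Fin d)) : ℝ :=
  if 1 < (inner ℝ z w : ℝ) then
    sPolarNeg s f w * (((inner ℝ z w : ℝ) - 1)⁻¹) ^ ((d : ℝ) + 1 + s) else 0

lemma pow_prod_eq {c : ℝ} (hc : 0 < c) (s L : ℝ) :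
    c⁻¹ ^ (d + 1) * (c⁻¹ ^ s * L) = L * (c⁻¹) ^ ((d : ℝ) + 1 + s) := by
  have h1 : (c⁻¹ : ℝ) ^ ((d : ℝ) + 1 + s) = c⁻¹ ^ ((d : ℝ) + 1) * c⁻¹ ^ s :=
    Real.rpow_add (inv_pos.mpr hc) _ _
  have h2 : (c⁻¹ : ℝ) ^ ((d : ℝ) + 1) = c⁻¹ ^ (d + 1) := by
    rw [show ((d : ℝ) + 1) = ((d + 1 : ℕ) : ℝ) by push_cast; ring, Real.rpow_natCast]
  rw [h1, h2]; ring

lemma repr_lemma (s : ℝ) (hs : 0 < s) (f : EuclideanSpace ℝ (Fin d) → ℝ) (hf : ∀ x, 0 ≤ f x)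
    {z : EuclideanSpace ℝ (Fin d)} {r : ℝ} (hr : 0 < r)
    (hball : Metric.ball z r ⊆ Function.support f) :
    Integrable (AAfun s f z) ∧ Integrable (BBfun s f z) ∧
      ∫ y, sPolar s (fun x => f (x + z)) y = (∫ w, AAfun s f z w) + ∫ w, BBfun s f z w := by
  have hz0 : 0 < f z := lt_of_le_of_ne (hf z) (Ne.symm (hball (Metric.mem_ball_self hr)))
  have hgint : Integrable (fun y => sPolar s (fun x => f (x + z)) y) :=
    integrable_sPolar_shift s f hs hf hr hball hz0
  set U : Set (EuclideanSpace ℝ (Fin d)) := {w | (inner ℝ z w : ℝ) < 1} with hU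
  set V : Set (EuclideanSpace ℝ (Fin d)) := {w | 1 < (inner ℝ z w : ℝ)} with hV
  have hUopen : IsOpen U := isOpen_lt (innerSL ℝ z).continuous continuous_const
  have hVopen : IsOpen V := isOpen_lt continuous_const (innerSL ℝ z).continuous
  have hUmeas : MeasurableSet U := hUopen.measurableSet
  have hVmeas : MeasurableSet V := hVopen.measurableSet
  -- derivatives
  have hderivU : ∀ w ∈ U, HasFDerivWithinAt (Tmap z) (Dz z w) U w := by
    intro w hw
    have hc : (1:ℝ) - (inner ℝ z w : ℝ) ≠ 0 := by
      rw [hU, mem_setOf_eq] at hw; intro h; rw [sub_eq_zero] at h; rw [← h] at hw; linarith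
    exact (hasFDerivAt_Tz z w hc).hasFDerivWithinAt
  have hderivV : ∀ w ∈ V, HasFDerivWithinAt (Tmap z) (Dz z w) V w := by
    intro w hw
    have hc : (1:ℝ) - (inner ℝ z w : ℝ) ≠ 0 := by
      rw [hV, mem_setOf_eq] at hw; intro h; rw [sub_eq_zero] at h; rw [← h] at hw; linarith
    exact (hasFDerivAt_Tz z w hc).hasFDerivWithinAt
  have hinjU : InjOn (Tmap z) U := by
    refine injOn_Tmap z fun w hw => ?_
    rw [hU, mem_setOf_eq] at hw; intro h; rw [sub_eq_zero] at h; rw [← h] at hw; linarith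
  have hinjV : InjOn (Tmap z) V := by
    refine injOn_Tmap z fun w hw => ?_
    rw [hV, mem_setOf_eq] at hw; intro h; rw [sub_eq_zero] at h; rw [← h] at hw; linarith
  -- pointwise identity on U
  have congrU : ∀ w ∈ U, |(Dz z w).det| • sPolar s (fun x => f (x + z)) (Tmap z w)
      = sPolar s f w * ((1 - (inner ℝ z w : ℝ))⁻¹) ^ ((d : ℝ) + 1 + s) := by
    intro w hw
    have hc : 0 < (1:ℝ) - (inner ℝ z w : ℝ) := by
      rw [hU, mem_setOf_eq] at hw; linarith
    rw [det_Dz z w hc.ne', abs_of_nonneg (pow_nonneg (inv_nonneg.mpr hc.le) _), smul_eq_mul]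
    have hT : Tmap z w = ((1:ℝ) - (inner ℝ z w : ℝ))⁻¹ • w := rfl
    rw [hT, sPolar_shift_pos s f hs hf z w hz0 hc]
    exact pow_prod_eq hc s _
  have congrV : ∀ w ∈ V, |(Dz z w).det| • sPolar s (fun x => f (x + z)) (Tmap z w)
      = sPolarNeg s f w * (((inner ℝ z w : ℝ) - 1)⁻¹) ^ ((d : ℝ) + 1 + s) := by
    intro w hw
    have hc : (1:ℝ) - (inner ℝ z w : ℝ) < 0 := by
      rw [hV, mem_setOf_eq] at hw; linarith
    have hq : 0 < (inner ℝ z w : ℝ) - 1 := by linarith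
    have habs : |((1 - (inner ℝ z w : ℝ))⁻¹) ^ (d + 1)| = (((inner ℝ z w : ℝ) - 1)⁻¹) ^ (d + 1) := by
      rw [abs_pow, abs_inv, abs_of_neg hc, neg_sub]
    rw [det_Dz z w hc.ne, habs, smul_eq_mul]
    have hT : Tmap z w = ((1:ℝ) - (inner ℝ z w : ℝ))⁻¹ • w := rfl
    rw [hT, sPolar_shift_neg s f hs hf z w hz0 hc]
    exact pow_prod_eq hq s _
  -- change of variables on U
  have covU : ∫ y in Tmap z '' U, sPolar s (fun x => f (x + z)) y
      = ∫ w in U, sPolar s f w * ((1 - (inner ℝ z w : ℝ))⁻¹) ^ ((d : ℝ) + 1 + s) := by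
    rw [integral_image_eq_integral_abs_det_fderiv_smul volume hUmeas hderivU hinjU]
    exact setIntegral_congr_fun hUmeas congrU
  have covV : ∫ y in Tmap z '' V, sPolar s (fun x => f (x + z)) y
      = ∫ w in V, sPolarNeg s f w * (((inner ℝ z w : ℝ) - 1)⁻¹) ^ ((d : ℝ) + 1 + s) := by
    rw [integral_image_eq_integral_abs_det_fderiv_smul volume hVmeas hderivV hinjV]
    exact setIntegral_congr_fun hVmeas congrV
  -- integrability on U, V
  have intU : IntegrableOn
      (fun w => sPolar s f w * ((1 - (inner ℝ z w : ℝ))⁻¹) ^ ((d : ℝ) + 1 + s)) U := by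
    have h1 : IntegrableOn (fun y => sPolar s (fun x => f (x + z)) y) (Tmap z '' U) :=
      hgint.integrableOn
    have h2 := (integrableOn_image_iff_integrableOn_abs_det_fderiv_smul volume hUmeas
      hderivU hinjU (fun y => sPolar s (fun x => f (x + z)) y)).mp h1
    exact (h2.congr_fun congrU hUmeas)
  have intV : IntegrableOn
      (fun w => sPolarNeg s f w * (((inner ℝ z w : ℝ) - 1)⁻¹) ^ ((d : ℝ) + 1 + s)) V := by
    have h1 : IntegrableOn (fun y => sPolar s (fun x => f (x + z)) y) (Tmap z '' V) :=
      hgint.integrableOn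
    have h2 := (integrableOn_image_iff_integrableOn_abs_det_fderiv_smul volume hVmeas
      hderivV hinjV (fun y => sPolar s (fun x => f (x + z)) y)).mp h1
    exact (h2.congr_fun congrV hVmeas)
  -- indicator representations
  have hAAind : AAfun s f z = U.indicator
      (fun w => sPolar s f w * ((1 - (inner ℝ z w : ℝ))⁻¹) ^ ((d : ℝ) + 1 + s)) := by
    funext w
    by_cases h : (inner ℝ z w : ℝ) < 1
    · rw [AAfun, if_pos h, indicator_of_mem (by rwa [hU, mem_setOf_eq])]
    · rw [AAfun, if_neg h, indicator_of_notMem (by rwa [hU, mem_setOf_eq])]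
  have hBBind : BBfun s f z = V.indicator
      (fun w => sPolarNeg s f w * (((inner ℝ z w : ℝ) - 1)⁻¹) ^ ((d : ℝ) + 1 + s)) := by
    funext w
    by_cases h : 1 < (inner ℝ z w : ℝ)
    · rw [BBfun, if_pos h, indicator_of_mem (by rwa [hV, mem_setOf_eq])]
    · rw [BBfun, if_neg h, indicator_of_notMem (by rwa [hV, mem_setOf_eq])]
  have hAAint : Integrable (AAfun s f z) := by
    rw [hAAind]
    exact (integrable_indicator_iff hUmeas).mpr intU
  have hBBint : Integrable (BBfun s f z) := by
    rw [hBBind]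
    exact (integrable_indicator_iff hVmeas).mpr intV
  refine ⟨hAAint, hBBint, ?_⟩
  -- splitting the integral
  have himUmeas : MeasurableSet (Tmap z '' U) := by
    rw [image_Tmap_U]
    exact (isOpen_lt continuous_const (innerSL ℝ z).continuous).measurableSet
  have himVmeas : MeasurableSet (Tmap z '' V) := by
    rw [image_Tmap_V]
    exact (isOpen_lt (innerSL ℝ z).continuous continuous_const).measurableSet
  have hdisj : Disjoint (Tmap z '' U) (Tmap z '' V) := by
    rw [image_Tmap_U, image_Tmap_V]
    refine Set.disjoint_left.mpr fun y hy1 hy2 => ?_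
    rw [mem_setOf_eq] at hy1 hy2
    linarith
  have hcompl : {y : EuclideanSpace ℝ (Fin d) | y ∉ Tmap z '' U ∪ Tmap z '' V}
      = {y : EuclideanSpace ℝ (Fin d) | (inner ℝ z y : ℝ) = -1} := by
    rw [image_Tmap_U, image_Tmap_V]
    ext y
    simp only [mem_setOf_eq, mem_union, not_or, not_lt]
    constructor
    · rintro ⟨h1, h2⟩; linarith
    · intro h; constructor <;> linarith
  have hae : ∀ᵐ y, y ∈ Tmap z '' U ∪ Tmap z '' V := by
    rw [MeasureTheory.ae_iff]
    have : {y : EuclideanSpace ℝ (Fin d) | ¬ y ∈ Tmap z '' U ∪ Tmap z '' V}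
        = {y : EuclideanSpace ℝ (Fin d) | (inner ℝ z y : ℝ) = -1} := hcompl
    rw [this]
    exact hyperplane_null z
  have hsplit : ∫ y, sPolar s (fun x => f (x + z)) y
      = (∫ y in Tmap z '' U, sPolar s (fun x => f (x + z)) y)
        + ∫ y in Tmap z '' V, sPolar s (fun x => f (x + z)) y := by
    have heq : (fun y => sPolar s (fun x => f (x + z)) y)
        =ᵐ[volume] (Tmap z '' U ∪ Tmap z '' V).indicator
          (fun y => sPolar s (fun x => f (x + z)) y) := by
      filter_upwards [hae] with y hy
      rw [indicator_of_mem hy]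
    rw [integral_congr_ae heq, integral_indicator (himUmeas.union himVmeas)]
    exact setIntegral_union hdisj himVmeas hgint.integrableOn hgint.integrableOn
  rw [hsplit, covU, covV, hAAind, hBBind, integral_indicator hUmeas, integral_indicator hVmeas]

/-- For an upper semi-continuous `1/s`-concave function `f` of finite integral, the
function `z ↦ ∫ L_s (f(·+z))` is convex on the interior of the support of `f`. -/
theorem convexOn_integral_sPolar_shift (d : ℕ) (s : ℝ) (hs : 0 < s)
    (f : EuclideanSpace ℝ (Fin d) → ℝ) (hf : ∀ x, 0 ≤ f x)
    (husc : UpperSemicontinuous f)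
    (hconc : ∀ x y : EuclideanSpace ℝ (Fin d), 0 < f x → 0 < f y →
      ∀ t ∈ Set.Icc (0 : ℝ) 1,
        (1 - t) * f x ^ (1 / s) + t * f y ^ (1 / s) ≤ f ((1 - t) • x + t • y) ^ (1 / s))
    (hint : Integrable f) :
    ConvexOn ℝ (interior (Function.support f))
      (fun z => ∫ y, sPolar s (fun x => f (x + z)) y) := by
  have hD : Convex ℝ (interior (Function.support f)) :=
    (support_convex s hs f hf hconc).interior
  refine ⟨hD, ?_⟩
  intro z₀ hz₀ z₁ hz₁ a b ha hb hab
  have hzc : a • z₀ + b • z₁ ∈ interior (Function.support f) := hD hz₀ hz₁ ha hb hab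
  obtain ⟨r₀, hr₀, hball₀⟩ : ∃ ε > 0, Metric.ball z₀ ε ⊆ Function.support f :=
    Metric.mem_nhds_iff.mp (mem_interior_iff_mem_nhds.mp hz₀)
  obtain ⟨r₁, hr₁, hball₁⟩ : ∃ ε > 0, Metric.ball z₁ ε ⊆ Function.support f :=
    Metric.mem_nhds_iff.mp (mem_interior_iff_mem_nhds.mp hz₁)
  obtain ⟨r₂, hr₂, hball₂⟩ : ∃ ε > 0, Metric.ball (a • z₀ + b • z₁) ε ⊆ Function.support f :=
    Metric.mem_nhds_iff.mp (mem_interior_iff_mem_nhds.mp hzc)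
  obtain ⟨intA₀, intB₀, rep₀⟩ := repr_lemma s hs f hf hr₀ hball₀
  obtain ⟨intA₁, intB₁, rep₁⟩ := repr_lemma s hs f hf hr₁ hball₁
  obtain ⟨intAc, intBc, repc⟩ := repr_lemma s hs f hf hr₂ hball₂
  have hd0 : (0:ℝ) ≤ (d:ℝ) := Nat.cast_nonneg d
  have hp1 : (1:ℝ) ≤ (d:ℝ) + 1 + s := by linarith
  -- pointwise inequality for AAfun
  have hAAle : ∀ w, AAfun s f (a • z₀ + b • z₁) w
      ≤ a * AAfun s f z₀ w + b * AAfun s f z₁ w := by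
    intro w
    have hL : 0 ≤ sPolar s f w := sPolar_nonneg s f hf w
    rcases eq_or_lt_of_le hL with hL0 | hLpos
    · simp [AAfun, ← hL0]
    · have h₀ : (inner ℝ z₀ w : ℝ) < 1 := sPolar_pos_inner_lt s hs f hf hr₀ hball₀ hLpos
      have h₁ : (inner ℝ z₁ w : ℝ) < 1 := sPolar_pos_inner_lt s hs f hf hr₁ hball₁ hLpos
      have hc : (inner ℝ (a • z₀ + b • z₁) w : ℝ) < 1 :=
        sPolar_pos_inner_lt s hs f hf hr₂ hball₂ hLpos
      simp only [AAfun, if_pos h₀, if_pos h₁, if_pos hc]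
      have hinner : (inner ℝ (a • z₀ + b • z₁) w : ℝ)
          = a * (inner ℝ z₀ w : ℝ) + b * (inner ℝ z₁ w : ℝ) := by
        rw [inner_add_left, real_inner_smul_left, real_inner_smul_left]
      have hcomb : 1 - (inner ℝ (a • z₀ + b • z₁) w : ℝ)
          = a * (1 - (inner ℝ z₀ w : ℝ)) + b * (1 - (inner ℝ z₁ w : ℝ)) := by
        rw [hinner]; linear_combination -hab
      rw [hcomb]
      have hkey := inv_rpow_convex_ineq hp1 (by linarith : (0:ℝ) < 1 - (inner ℝ z₀ w : ℝ))
        (by linarith : (0:ℝ) < 1 - (inner ℝ z₁ w : ℝ)) ha hb hab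
      calc sPolar s f w * ((a * (1 - (inner ℝ z₀ w : ℝ)) + b * (1 - (inner ℝ z₁ w : ℝ)))⁻¹)
              ^ ((d : ℝ) + 1 + s)
          ≤ sPolar s f w * (a * ((1 - (inner ℝ z₀ w : ℝ))⁻¹) ^ ((d : ℝ) + 1 + s)
              + b * ((1 - (inner ℝ z₁ w : ℝ))⁻¹) ^ ((d : ℝ) + 1 + s)) :=
            mul_le_mul_of_nonneg_left hkey (le_of_lt hLpos)
        _ = a * (sPolar s f w * ((1 - (inner ℝ z₀ w : ℝ))⁻¹) ^ ((d : ℝ) + 1 + s))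
              + b * (sPolar s f w * ((1 - (inner ℝ z₁ w : ℝ))⁻¹) ^ ((d : ℝ) + 1 + s)) := by
            ring
  -- pointwise inequality for BBfun
  have hBBle : ∀ w, BBfun s f (a • z₀ + b • z₁) w
      ≤ a * BBfun s f z₀ w + b * BBfun s f z₁ w := by
    intro w
    have hL : 0 ≤ sPolarNeg s f w :=
      Real.iInf_nonneg fun x => div_nonneg (Real.rpow_nonneg (le_max_right _ _) s) (le_of_lt x.2)
    rcases eq_or_lt_of_le hL with hL0 | hLpos
    · simp [BBfun, ← hL0]
    · have h₀ : 1 < (inner ℝ z₀ w : ℝ) := sPolarNeg_pos_inner_gt s hs f hf hr₀ hball₀ hLpos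
      have h₁ : 1 < (inner ℝ z₁ w : ℝ) := sPolarNeg_pos_inner_gt s hs f hf hr₁ hball₁ hLpos
      have hc : 1 < (inner ℝ (a • z₀ + b • z₁) w : ℝ) :=
        sPolarNeg_pos_inner_gt s hs f hf hr₂ hball₂ hLpos
      simp only [BBfun, if_pos h₀, if_pos h₁, if_pos hc]
      have hinner : (inner ℝ (a • z₀ + b • z₁) w : ℝ)
          = a * (inner ℝ z₀ w : ℝ) + b * (inner ℝ z₁ w : ℝ) := by
        rw [inner_add_left, real_inner_smul_left, real_inner_smul_left]
      have hcomb : (inner ℝ (a • z₀ + b • z₁) w : ℝ) - 1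
          = a * ((inner ℝ z₀ w : ℝ) - 1) + b * ((inner ℝ z₁ w : ℝ) - 1) := by
        rw [hinner]; linear_combination hab
      rw [hcomb]
      have hkey := inv_rpow_convex_ineq hp1 (by linarith : (0:ℝ) < (inner ℝ z₀ w : ℝ) - 1)
        (by linarith : (0:ℝ) < (inner ℝ z₁ w : ℝ) - 1) ha hb hab
      calc sPolarNeg s f w * ((a * ((inner ℝ z₀ w : ℝ) - 1) + b * ((inner ℝ z₁ w : ℝ) - 1))⁻¹)
              ^ ((d : ℝ) + 1 + s)
          ≤ sPolarNeg s f w * (a * (((inner ℝ z₀ w : ℝ) - 1)⁻¹) ^ ((d : ℝ) + 1 + s)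
              + b * (((inner ℝ z₁ w : ℝ) - 1)⁻¹) ^ ((d : ℝ) + 1 + s)) :=
            mul_le_mul_of_nonneg_left hkey (le_of_lt hLpos)
        _ = a * (sPolarNeg s f w * (((inner ℝ z₀ w : ℝ) - 1)⁻¹) ^ ((d : ℝ) + 1 + s))
              + b * (sPolarNeg s f w * (((inner ℝ z₁ w : ℝ) - 1)⁻¹) ^ ((d : ℝ) + 1 + s)) := by
            ring
  -- assemble
  have hintA : Integrable (fun w => a * AAfun s f z₀ w + b * AAfun s f z₁ w) :=
    (intA₀.const_mul a).add (intA₁.const_mul b)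
  have hintB : Integrable (fun w => a * BBfun s f z₀ w + b * BBfun s f z₁ w) :=
    (intB₀.const_mul a).add (intB₁.const_mul b)
  have hmono1 : (∫ w, AAfun s f (a • z₀ + b • z₁) w)
      ≤ ∫ w, a * AAfun s f z₀ w + b * AAfun s f z₁ w :=
    integral_mono intAc hintA hAAle
  have hmono2 : (∫ w, BBfun s f (a • z₀ + b • z₁) w)
      ≤ ∫ w, a * BBfun s f z₀ w + b * BBfun s f z₁ w :=
    integral_mono intBc hintB hBBle
  have hA : (∫ w, a * AAfun s f z₀ w + b * AAfun s f z₁ w)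
      = a * (∫ w, AAfun s f z₀ w) + b * ∫ w, AAfun s f z₁ w := by
    rw [integral_add (intA₀.const_mul a) (intA₁.const_mul b), integral_const_mul,
      integral_const_mul]
  have hB : (∫ w, a * BBfun s f z₀ w + b * BBfun s f z₁ w)
      = a * (∫ w, BBfun s f z₀ w) + b * ∫ w, BBfun s f z₁ w := by
    rw [integral_add (intB₀.const_mul a) (intB₁.const_mul b), integral_const_mul,
      integral_const_mul]
  simp only [smul_eq_mul]
  calc (∫ y, sPolar s (fun x => f (x + (a • z₀ + b • z₁))) y)
      = (∫ w, AAfun s f (a • z₀ + b • z₁) w) + ∫ w, BBfun s f (a • z₀ + b • z₁) w := repc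
    _ ≤ (∫ w, a * AAfun s f z₀ w + b * AAfun s f z₁ w)
          + ∫ w, a * BBfun s f z₀ w + b * BBfun s f z₁ w := add_le_add hmono1 hmono2
    _ = a * ((∫ w, AAfun s f z₀ w) + ∫ w, BBfun s f z₀ w)
          + b * ((∫ w, AAfun s f z₁ w) + ∫ w, BBfun s f z₁ w) := by
        rw [hA, hB]; ring
    _ = a * (∫ y, sPolar s (fun x => f (x + z₀)) y)
          + b * ∫ y, sPolar s (fun x => f (x + z₁)) y := by
        rw [rep₀, rep₁]
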